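/- For every p with 0 < p < 1, setting s = min(p, p(1+q)²/(2+q)), the symmetric point (s, s) belongs to the global delayed-CSIT region C₈(p) but violates the no-CSIT sum constraint: 2s > 1 − q². Consequently C₀(p) is a strict subset of C₈(p) for 0 < p < 1. -/

import Mathlib

/-- No-CSIT capacity region of the two-user erasure IC, `q = 1 - p`. -/
def noCSITRegion (p : ℝ) : Set (ℝ × ℝ) :=
  {R | 0 ≤ R.1 ∧ R.1 ≤ p ∧ 0 ≤ R.2 ∧ R.2 ≤ p ∧ R.1 + R.2 ≤ 1 - (1 - p) ^ 2}

/-- Global delayed-CSIT capacity region of the two-user erasure IC, `q = 1 - p`. -/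
def globalDelayedCSITRegion (p : ℝ) : Set (ℝ × ℝ) :=
  {R | 0 ≤ R.1 ∧ R.1 ≤ p ∧ 0 ≤ R.2 ∧ R.2 ≤ p ∧
    R.1 + (1 + (1 - p)) * R.2 ≤ p * (1 + (1 - p)) ^ 2 ∧
    R.2 + (1 + (1 - p)) * R.1 ≤ p * (1 + (1 - p)) ^ 2}

/-- for `0 < p < 1` and `s = min (p, p(1+q)²/(2+q))` with `q = 1-p`,
the symmetric point `(s,s)` lies in the global delayed-CSIT region but violates the
no-CSIT sum constraint `2s > 1 - q²`; consequently the no-CSIT region is a strict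
subset of the global delayed-CSIT region. -/
theorem symmetric_point_strict_gain (p : ℝ) (hp0 : 0 < p) (hp1 : p < 1) :
    let q := 1 - p
    let s := min p (p * (1 + q) ^ 2 / (2 + q))
    (s, s) ∈ globalDelayedCSITRegion p ∧ 2 * s > 1 - q ^ 2 ∧
      noCSITRegion p ⊂ globalDelayedCSITRegion p := by
  intro q s
  have hq0 : 0 < q := by simp only [q]; linarith
  have hq1 : q < 1 := by simp only [q]; linarith
  have hden : (0:ℝ) < 2 + q := by linarith
  have hs_le_p : s ≤ p := min_le_left _ _
  have hs_le_frac : s ≤ p * (1 + q) ^ 2 / (2 + q) := min_le_right _ _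
  have hs0 : 0 ≤ s := le_min hp0.le (by positivity)
  have hbig : s * (2 + q) ≤ p * (1 + q) ^ 2 := by
    calc s * (2 + q) ≤ (p * (1 + q) ^ 2 / (2 + q)) * (2 + q) := by
          exact mul_le_mul_of_nonneg_right hs_le_frac hden.le
      _ = p * (1 + q) ^ 2 := by field_simp
  have hqdef : (1:ℝ) - p = q := rfl
  have hmem : (s, s) ∈ globalDelayedCSITRegion p := by
    refine ⟨hs0, hs_le_p, hs0, hs_le_p, ?_, ?_⟩ <;>
      (simp only [hqdef]; nlinarith [hbig])
  have hgt : 2 * s > 1 - q ^ 2 := by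
    have h1 : 2 * p > 1 - q ^ 2 := by nlinarith
    have h2 : 2 * (p * (1 + q) ^ 2 / (2 + q)) > 1 - q ^ 2 := by
      rw [gt_iff_lt, ← sub_pos]
      have : 2 * (p * (1 + q) ^ 2 / (2 + q)) - (1 - q ^ 2)
          = (2 * (p * (1 + q) ^ 2) - (1 - q ^ 2) * (2 + q)) / (2 + q) := by
        field_simp
      rw [this]
      apply div_pos _ hden
      have hpq : p = 1 - q := by simp only [q]; ring
      nlinarith [mul_pos hq0 hp0, sq_nonneg q]
    rcases min_cases p (p * (1 + q) ^ 2 / (2 + q)) with ⟨h, _⟩ | ⟨h, _⟩ <;>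
      simp only [s, h] <;> assumption
  refine ⟨hmem, hgt, ?_⟩
  constructor
  · rintro ⟨R₁, R₂⟩ ⟨h1, h2, h3, h4, h5⟩
    refine ⟨h1, h2, h3, h4, ?_, ?_⟩ <;>
      · simp only [hqdef] at *
        have hpq : q = 1 - p := rfl
        nlinarith [mul_nonneg (sq_nonneg q) hp0.le]
  · intro hsub
    have := hsub hmem
    have : s + s ≤ 1 - (1 - p) ^ 2 := this.2.2.2.2
    simp only [hqdef] at this
    linarith
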